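/- Let O be a finite set of operations with machine assignment mach : O → M, processing times delay : O → ℝ, and a partial immediate-predecessor function pre, and let X be a list of operations none of which occurs twice. Let (f^M, f^O) and (f^M, g^O) be two initial states with the same machine-completion vector f^M, such that f^O(y) = g^O(y) for every operation y that is the immediate predecessor pre(x) of some operation x occurring in X. Then CFP applied to X from (f^M, f^O) returns the same makespan as CFP applied to X from (f^M, g^O). In particular, the completion times of 'long-done' operations—those that are not the immediate predecessor of any remaining operation—may be discarded from the state without changing any future cost. -/

import Mathlib

noncomputable section

/-- One step of the cost-from-partial (CFP) procedure: process operation `x`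
from state `st = (f^M, f^O)` of machine- and operation-completion times.
We set `s := max (f^M (mach x)) (f^O (pre x))` (the second term omitted when
`x` has no immediate predecessor) and record `s + delay x` as the new
completion time of both `x` and its machine. -/
def JSP.step {O M : Type*} [DecidableEq O] [DecidableEq M]
    (mach : O → M) (delay : O → ℝ) (pre : O → Option O)
    (st : (M → ℝ) × (O → ℝ)) (x : O) : (M → ℝ) × (O → ℝ) :=
  let s : ℝ := match pre x with
    | none => st.1 (mach x)
    | some y => max (st.1 (mach x)) (st.2 y)
  (Function.update st.1 (mach x) (s + delay x),
   Function.update st.2 x (s + delay x))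

/-- The cost-from-partial procedure (Algorithm CFP): process the list `X` of
operations left to right from the initial state `st = (f^M, f^O)`, and return
the resulting makespan, i.e. the maximum over all machines `k` of the final
machine-completion time `f^M k`. -/
def JSP.CFP {O M : Type*} [DecidableEq O] [DecidableEq M] [Fintype M] [Nonempty M]
    (mach : O → M) (delay : O → ℝ) (pre : O → Option O)
    (X : List O) (st : (M → ℝ) × (O → ℝ)) : ℝ :=
  Finset.univ.sup' Finset.univ_nonempty (X.foldl (JSP.step mach delay pre) st).1


lemma JSP.foldl_fst_eq {O M : Type*} [DecidableEq O] [DecidableEq M]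
    (mach : O → M) (delay : O → ℝ) (pre : O → Option O) :
    ∀ (X : List O) (st1 st2 : (M → ℝ) × (O → ℝ)), st1.1 = st2.1 →
      (∀ y : O, (∃ x ∈ X, pre x = some y) → st1.2 y = st2.2 y) →
      (X.foldl (JSP.step mach delay pre) st1).1 = (X.foldl (JSP.step mach delay pre) st2).1 := by
  intro X
  induction X with
  | nil => intro st1 st2 h1 _; exact h1
  | cons x xs ih =>
    intro st1 st2 h1 h2
    simp only [List.foldl_cons]
    have hs : (match pre x with
        | none => st2.1 (mach x)
        | some y => max (st2.1 (mach x)) (st1.2 y)) =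
        (match pre x with
        | none => st2.1 (mach x)
        | some y => max (st2.1 (mach x)) (st2.2 y)) := by
      cases hp : pre x with
      | none => rfl
      | some y => simp only [h2 y ⟨x, List.mem_cons_self, hp⟩]
    apply ih
    · simp only [JSP.step, h1, hs]
    · intro y ⟨x', hx', hpx'⟩
      simp only [JSP.step]
      by_cases hyx : y = x
      · subst hyx; simp only [Function.update_self]; rw [h1]; exact congrArg (· + delay _) hs
      · simp only [Function.update_of_ne hyx]
        exact h2 y ⟨x', List.mem_cons_of_mem x hx', hpx'⟩


/-- Symmetry reduction (Model 2): if a list `X` of operations has no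
duplicates, then the makespan returned by CFP on `X` depends on the initial
operation-completion times only through the values of operations that are the
immediate predecessor of some operation occurring in `X`.  Completion times
of "long-done" operations may be discarded from the state. -/
theorem JSP.CFP_ignores_longDone {O M : Type*} [DecidableEq O] [DecidableEq M]
    [Fintype O] [Fintype M] [Nonempty M]
    (mach : O → M) (delay : O → ℝ) (pre : O → Option O)
    (X : List O) (hX : X.Nodup)
    (fM : M → ℝ) (fO gO : O → ℝ)
    (hpre : ∀ y : O, (∃ x ∈ X, pre x = some y) → fO y = gO y) :
    JSP.CFP mach delay pre X (fM, fO) = JSP.CFP mach delay pre X (fM, gO) := by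
  unfold JSP.CFP
  rw [JSP.foldl_fst_eq mach delay pre X (fM, fO) (fM, gO) rfl hpre]

end
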